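/- For m ≥ 2 and k, ℓ ∈ ℤ with k ≥ 0, the homology H_k(OP(ℓ,m)) vanishes unless (k,ℓ) = (2i, mi) or (k,ℓ) = (2i+1, mi+1) for some i ≥ 0, in which cases it is a free R-module of rank 1, generated respectively by the class of (1,m-1,...,1,m-1) (with 2i entries) and of (1,m-1,...,1,m-1,1) (with 2i+1 entries). -/

import Mathlib

open scoped Classical

/-- Basis of `OP_k(ℓ,m)`: ordered partitions of `ℓ` into `k` parts, all in `{1,...,m-1}`. -/
def OPb (ℓ : ℤ) (m k : ℕ) : Type :=
  {l : List ℕ // l.length = k ∧ (l.sum : ℤ) = ℓ ∧ ∀ x ∈ l, 1 ≤ x ∧ x < m}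

/-- The degree-`k` chain module of the complex of ordered partitions with upper bound. -/
abbrev OPMod (R : Type) [CommRing R] (ℓ : ℤ) (m k : ℕ) := OPb ℓ m k →₀ R

/-- The alternating sum of adjacent merges of a list, dropping merged entries `≥ m`. -/
noncomputable def dList (R : Type) [CommRing R] (m : ℕ) : List ℕ → (List ℕ →₀ R)
  | [] => 0
  | [_] => 0
  | a :: b :: t =>
      (if a + b < m then -Finsupp.single ((a + b) :: t) (1 : R) else 0)
        - Finsupp.mapDomain (List.cons a) (dList R m (b :: t))

/-- Embedding of `OP_k(ℓ,m)` into the free module on all lists. -/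
noncomputable def eL (R : Type) [CommRing R] (ℓ : ℤ) (m k : ℕ) :
    OPMod R ℓ m k →ₗ[R] (List ℕ →₀ R) :=
  Finsupp.lmapDomain R R Subtype.val

noncomputable def DL (R : Type) [CommRing R] (m : ℕ) : (List ℕ →₀ R) →ₗ[R] (List ℕ →₀ R) :=
  Finsupp.lsum R fun l => LinearMap.toSpanSingleton R _ (dList R m l)

noncomputable def rL (R : Type) [CommRing R] (ℓ : ℤ) (m k : ℕ) :
    (List ℕ →₀ R) →ₗ[R] OPMod R ℓ m k :=
  Finsupp.lcomapDomain Subtype.val Subtype.val_injective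

/-- The differential of the complex `OP_*(ℓ,m)`: merge adjacent entries with alternating
signs `(-1)^i`, dropping any term in which the merged entry is `≥ m`. -/
noncomputable def dOP (R : Type) [CommRing R] (ℓ : ℤ) (m k : ℕ) :
    OPMod R ℓ m (k + 1) →ₗ[R] OPMod R ℓ m k :=
  (rL R ℓ m k) ∘ₗ (DL R m) ∘ₗ (eL R ℓ m (k + 1))

/-- The outgoing differential from degree `k` (zero in degree `0`). -/
noncomputable def dOPOut (R : Type) [CommRing R] (ℓ : ℤ) (m : ℕ) :
    (k : ℕ) → OPMod R ℓ m k →ₗ[R] OPMod R ℓ m (k - 1)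
  | 0 => 0
  | (k + 1) => dOP R ℓ m k

/-- Homology of the complex `OP_*(ℓ,m)` in degree `k`. -/
noncomputable abbrev OPH (R : Type) [CommRing R] (ℓ : ℤ) (m k : ℕ) :=
  letI : HasQuotient (LinearMap.ker (dOPOut R ℓ m k))
      (Submodule R (LinearMap.ker (dOPOut R ℓ m k))) :=
      Submodule.hasQuotient (R := R) (M := LinearMap.ker (dOPOut R ℓ m k))
  LinearMap.ker (dOPOut R ℓ m k) ⧸
    (LinearMap.range (dOPOut R ℓ m (k + 1))).comap (LinearMap.ker (dOPOut R ℓ m k)).subtype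

/-- The chain map `φ : OP_{*-2}(ℓ-m,m) → OP_*(ℓ,m)`, prepending `(1, m-1)`. -/
noncomputable def phiOP (R : Type) [CommRing R] (ℓ : ℤ) (m : ℕ) (hm : 2 ≤ m) (k : ℕ) :
    OPMod R (ℓ - m) m k →ₗ[R] OPMod R ℓ m (k + 2) :=
  Finsupp.lmapDomain R R fun b =>
    ⟨1 :: (m - 1) :: b.1, by
      obtain ⟨h1, h2, h3⟩ := b.2
      refine ⟨by simpa using h1, ?_, ?_⟩
      · simp only [List.sum_cons]
        omega
      · intro y hy
        simp only [List.mem_cons] at hy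
        rcases hy with rfl | rfl | hy
        · omega
        · omega
        · exact h3 y hy⟩

/-- The alternating list `(1, m-1, 1, m-1, ...)` with `2i` entries. -/
def altL (m : ℕ) : ℕ → List ℕ
  | 0 => []
  | i + 1 => 1 :: (m - 1) :: altL m i

/-- The alternating list `(m-1, 1, m-1, 1, ...)` with `2i` entries. -/
def altL' (m : ℕ) : ℕ → List ℕ
  | 0 => []
  | i + 1 => (m - 1) :: 1 :: altL' m i
section Aux

open Finsupp

variable (R : Type) [CommRing R]

/-- property of being an honest basis element -/
abbrev GoodL (ℓ : ℤ) (m k : ℕ) (l : List ℕ) : Prop :=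
  l.length = k ∧ (l.sum : ℤ) = ℓ ∧ ∀ x ∈ l, 1 ≤ x ∧ x < m

/-- The contracting homotopy on lists: split a leading entry `a ≥ 2` into `1, a-1`. -/
noncomputable def hList (m : ℕ) : List ℕ → (List ℕ →₀ R)
  | [] => 0
  | a :: t => if a ≤ 1 then 0 else Finsupp.single (1 :: (a - 1) :: t) 1

/-- merge `a` with the head of the list -/
noncomputable def mList (m a : ℕ) : List ℕ → (List ℕ →₀ R)
  | [] => 0
  | c :: t => if a + c < m then Finsupp.single ((a + c) :: t) 1 else 0

noncomputable def HL (m : ℕ) : (List ℕ →₀ R) →ₗ[R] (List ℕ →₀ R) :=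
  Finsupp.lsum R fun l => LinearMap.toSpanSingleton R _ (hList R m l)

noncomputable def ML (m a : ℕ) : (List ℕ →₀ R) →ₗ[R] (List ℕ →₀ R) :=
  Finsupp.lsum R fun l => LinearMap.toSpanSingleton R _ (mList R m a l)

variable {R}

lemma DL_single (m : ℕ) (l : List ℕ) (r : R) :
    DL R m (Finsupp.single l r) = r • dList R m l := by
  simp [DL, Finsupp.lsum_single, LinearMap.toSpanSingleton_apply]

lemma HL_single (m : ℕ) (l : List ℕ) (r : R) :
    HL R m (Finsupp.single l r) = r • hList R m l := by
  simp [HL, Finsupp.lsum_single, LinearMap.toSpanSingleton_apply]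

lemma ML_single (m a : ℕ) (l : List ℕ) (r : R) :
    ML R m a (Finsupp.single l r) = r • mList R m a l := by
  simp [ML, Finsupp.lsum_single, LinearMap.toSpanSingleton_apply]

lemma mapD_neg (f : List ℕ → List ℕ) (x : List ℕ →₀ R) :
    Finsupp.mapDomain f (-x) = -Finsupp.mapDomain f x :=
  map_neg (Finsupp.lmapDomain R R f) x

lemma mapD_sub (f : List ℕ → List ℕ) (x y : List ℕ →₀ R) :
    Finsupp.mapDomain f (x - y) = Finsupp.mapDomain f x - Finsupp.mapDomain f y :=
  map_sub (Finsupp.lmapDomain R R f) x y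

lemma dList_cons_cons (m a c : ℕ) (t : List ℕ) :
    dList R m (a :: c :: t) =
      (if a + c < m then -Finsupp.single ((a + c) :: t) (1 : R) else 0)
        - Finsupp.mapDomain (List.cons a) (dList R m (c :: t)) := rfl

lemma DL_mapDomain_cons (m a : ℕ) (y : List ℕ →₀ R) :
    DL R m (Finsupp.mapDomain (List.cons a) y)
      = -(ML R m a y) - Finsupp.mapDomain (List.cons a) (DL R m y) := by
  induction y using Finsupp.induction_linear with
  | zero => simp
  | add f g hf hg =>
      simp only [Finsupp.mapDomain_add, map_add, hf, hg]
      abel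
  | single l r =>
      rw [Finsupp.mapDomain_single, DL_single, DL_single, ML_single]
      cases l with
      | nil => simp [dList, mList]
      | cons c t =>
          simp only [dList_cons_cons, mList, smul_sub, smul_ite, smul_neg, smul_zero,
            Finsupp.mapDomain_smul]
          split_ifs <;> abel

lemma ML_mapDomain_cons (m a b : ℕ) (y : List ℕ →₀ R) :
    ML R m a (Finsupp.mapDomain (List.cons b) y)
      = if a + b < m then Finsupp.mapDomain (List.cons (a + b)) y else 0 := by
  induction y using Finsupp.induction_linear with
  | zero => simp
  | add f g hf hg =>
      simp only [Finsupp.mapDomain_add, map_add, hf, hg]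
      split_ifs <;> simp
  | single l r =>
      rw [Finsupp.mapDomain_single, ML_single]
      simp only [mList]
      split_ifs <;> simp [Finsupp.mapDomain_smul, Finsupp.mapDomain_single]

lemma ML_dList (m a b : ℕ) (t : List ℕ) :
    ML R m a (dList R m (b :: t))
      = if a + b < m then dList R m ((a + b) :: t) else 0 := by
  cases t with
  | nil => simp [dList]
  | cons c t' =>
      rw [dList_cons_cons, map_sub, ML_mapDomain_cons]
      have e1 : ML R m a (if b + c < m then -Finsupp.single ((b + c) :: t') (1 : R) else 0)
          = if a + b + c < m then -Finsupp.single ((a + b + c) :: t') (1 : R) else 0 := by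
        split_ifs with h1 h2 h2
        · rw [map_neg, ML_single, one_smul]
          simp only [mList, if_pos (show a + (b + c) < m by omega)]
          rw [← Nat.add_assoc]
        · rw [map_neg, ML_single, one_smul]
          simp only [mList, if_neg (show ¬ a + (b + c) < m by omega)]
          simp
        · omega
        · simp
      rw [e1]
      by_cases h1 : a + b < m
      · rw [if_pos h1, if_pos h1, dList_cons_cons]
      · rw [if_neg h1, if_neg h1, if_neg (show ¬ a + b + c < m by omega)]
        simp

lemma DL_dList (m : ℕ) : ∀ (n : ℕ) (l : List ℕ), l.length ≤ n → DL R m (dList R m l) = 0 := by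
  intro n
  induction n with
  | zero => intro l hl; rw [List.length_eq_zero_iff.mp (Nat.le_zero.mp hl)]; simp [dList]
  | succ n ih =>
      intro l hl
      match l with
      | [] => simp [dList]
      | [a] => simp [dList]
      | a :: c :: t =>
          rw [dList_cons_cons, map_sub, DL_mapDomain_cons,
            ih (c :: t) (by simp only [List.length_cons] at hl ⊢; omega),
            ML_dList]
          by_cases h : a + c < m
          · rw [if_pos h, if_pos h, map_neg, DL_single, one_smul, Finsupp.mapDomain_zero]
            abel
          · rw [if_neg h, if_neg h, map_zero, Finsupp.mapDomain_zero]
            abel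

lemma DL_DL (m : ℕ) (y : List ℕ →₀ R) : DL R m (DL R m y) = 0 := by
  induction y using Finsupp.induction_linear with
  | zero => simp
  | add f g hf hg => rw [map_add, map_add, hf, hg, add_zero]
  | single l r =>
      rw [DL_single, map_smul, DL_dList m l.length l le_rfl, smul_zero]

end Aux
section Aux2

open Finsupp

variable {R : Type} [CommRing R]

lemma HL_mapDomain_cons1 (m : ℕ) (y : List ℕ →₀ R) :
    HL R m (Finsupp.mapDomain (List.cons 1) y) = 0 := by
  induction y using Finsupp.induction_linear with
  | zero => simp
  | add f g hf hg => simp only [Finsupp.mapDomain_add, map_add, hf, hg, add_zero]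
  | single l r =>
      rw [Finsupp.mapDomain_single, HL_single]
      simp [hList]

lemma HL_mapDomain_cons (m a : ℕ) (ha : 2 ≤ a) (y : List ℕ →₀ R) :
    HL R m (Finsupp.mapDomain (List.cons a) y)
      = Finsupp.mapDomain (List.cons 1 ∘ List.cons (a - 1)) y := by
  induction y using Finsupp.induction_linear with
  | zero => simp
  | add f g hf hg => simp only [Finsupp.mapDomain_add, map_add, hf, hg]
  | single l r =>
      rw [Finsupp.mapDomain_single, HL_single, Finsupp.mapDomain_single]
      simp only [hList, if_neg (show ¬ a ≤ 1 by omega), Function.comp_apply]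
      rw [Finsupp.smul_single, smul_eq_mul, mul_one]

/-- The span of basis elements starting with `1, m-1`. -/
noncomputable def SpS (R : Type) [CommRing R] (m : ℕ) : Submodule R (List ℕ →₀ R) :=
  Submodule.span R {f | ∃ t : List ℕ, f = Finsupp.single (1 :: (m - 1) :: t) (1 : R)}

/-- The key homotopy identity on basis elements. -/
lemma homotopy_single (m : ℕ) (hm : 2 ≤ m) (l : List ℕ)
    (hl : ∀ x ∈ l, 1 ≤ x ∧ x < m) (h0 : l ≠ []) (h1 : l ≠ [1]) :
    Finsupp.single l (1 : R) + DL R m (hList R m l) + HL R m (dList R m l) ∈ SpS R m := by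
  match l with
  | [] => exact absurd rfl h0
  | [a] =>
      have ha : 2 ≤ a := by
        have := hl a (by simp)
        rcases Nat.lt_or_ge a 2 with h | h
        · interval_cases a
          · omega
          · exact absurd rfl h1
        · exact h
      have ham : a < m := (hl a (by simp)).2
      simp only [hList, if_neg (show ¬ a ≤ 1 by omega)]
      rw [show dList R m [a] = 0 from rfl, map_zero, add_zero, DL_single, one_smul]
      rw [show dList R m (1 :: (a-1) :: []) =
        (if 1 + (a-1) < m then -Finsupp.single ((1 + (a-1)) :: ([] : List ℕ)) (1:R) else 0)
          - Finsupp.mapDomain (List.cons 1) (dList R m [a-1]) from rfl]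
      rw [show dList R m [a-1] = 0 from rfl, Finsupp.mapDomain_zero, sub_zero,
        if_pos (show 1 + (a-1) < m by omega), show 1 + (a-1) = a by omega]
      simp only [add_neg_cancel]
      exact (SpS R m).zero_mem
  | a :: c :: t =>
      have hc1 : 1 ≤ c := (hl c (by simp)).1
      have hcm : c < m := (hl c (by simp)).2
      have ham : a < m := (hl a (by simp)).2
      by_cases ha : a ≤ 1
      · -- a = 1 case
        have ha1 : a = 1 := by have := (hl a (by simp)).1; omega
        subst ha1
        simp only [hList, if_pos (le_refl 1), map_zero, add_zero]
        rw [dList_cons_cons, map_sub, HL_mapDomain_cons1, sub_zero]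
        by_cases hc : 1 + c < m
        · rw [if_pos hc, map_neg, HL_single, one_smul]
          simp only [hList, if_neg (show ¬ 1 + c ≤ 1 by omega), show 1 + c - 1 = c by omega]
          simp only [add_neg_cancel]
          exact (SpS R m).zero_mem
        · have hc2 : c = m - 1 := by omega
          rw [if_neg hc, map_zero, add_zero]
          subst hc2
          exact Submodule.subset_span ⟨t, rfl⟩
      · -- a ≥ 2 case
        push_neg at ha
        simp only [hList, if_neg (show ¬ a ≤ 1 by omega)]
        rw [DL_single, one_smul]
        rw [dList_cons_cons (m := m) (a := 1) (c := a - 1),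
          if_pos (show 1 + (a-1) < m by omega), show 1 + (a-1) = a by omega]
        rw [dList_cons_cons (m := m) (a := a - 1) (c := c), mapD_sub]
        rw [dList_cons_cons (m := m) (a := a) (c := c), map_sub,
          HL_mapDomain_cons m a ha, ← Finsupp.mapDomain_comp]
        have hHLif : HL R m (if a + c < m then -Finsupp.single ((a + c) :: t) (1:R) else 0)
            = if a + c < m then -Finsupp.single (1 :: (a + c - 1) :: t) (1:R) else 0 := by
          split_ifs with h
          · rw [map_neg, HL_single, one_smul]
            simp only [hList, if_neg (show ¬ a + c ≤ 1 by omega)]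
          · simp
        rw [hHLif]
        have hmapif : Finsupp.mapDomain (List.cons 1)
              (if a - 1 + c < m then -Finsupp.single ((a - 1 + c) :: t) (1:R) else 0)
            = if a + c - 1 < m then -Finsupp.single (1 :: (a + c - 1) :: t) (1:R) else 0 := by
          rw [show a - 1 + c = a + c - 1 by omega]
          split_ifs with h
          · rw [mapD_neg, Finsupp.mapDomain_single]
          · simp
        rw [hmapif]
        by_cases h2 : a + c < m
        · rw [if_pos h2, if_pos (show a + c - 1 < m by omega)]
          have : (Finsupp.single (a :: c :: t) (1:R)
              + (-Finsupp.single (a :: c :: t) (1:R)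
                  - (-Finsupp.single (1 :: (a + c - 1) :: t) (1:R)
                      - Finsupp.mapDomain (List.cons 1 ∘ List.cons (a-1)) (dList R m (c :: t))))
              + (-Finsupp.single (1 :: (a + c - 1) :: t) (1:R)
                  - Finsupp.mapDomain (List.cons 1 ∘ List.cons (a-1)) (dList R m (c :: t)))) = 0 := by
            abel
          rw [this]
          exact (SpS R m).zero_mem
        · rw [if_neg h2]
          by_cases h3 : a + c - 1 < m
          · have hac : a + c = m := by omega
            rw [if_pos h3]
            have : (Finsupp.single (a :: c :: t) (1:R)
                + (-Finsupp.single (a :: c :: t) (1:R)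
                    - (-Finsupp.single (1 :: (a + c - 1) :: t) (1:R)
                        - Finsupp.mapDomain (List.cons 1 ∘ List.cons (a-1)) (dList R m (c :: t))))
                + (0 - Finsupp.mapDomain (List.cons 1 ∘ List.cons (a-1)) (dList R m (c :: t))))
                = Finsupp.single (1 :: (a + c - 1) :: t) (1:R) := by
              abel
            rw [this, show a + c - 1 = m - 1 by omega]
            exact Submodule.subset_span ⟨t, rfl⟩
          · rw [if_neg h3]
            have hz : ∀ (u G : List ℕ →₀ R), u + (-u - (0 - G)) + (0 - G) = 0 := by
              intros; abel
            rw [hz]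
            exact (SpS R m).zero_mem

/-- differentials interact with prepending `(1, m-1)`. -/
lemma dList_pp (m : ℕ) (hm : 2 ≤ m) (b : List ℕ) (hb : ∀ x ∈ b, 1 ≤ x) :
    dList R m (1 :: (m - 1) :: b)
      = Finsupp.mapDomain (List.cons 1 ∘ List.cons (m - 1)) (dList R m b) := by
  cases b with
  | nil =>
      rw [show dList R m ([] : List ℕ) = 0 from rfl, Finsupp.mapDomain_zero]
      rw [dList_cons_cons, if_neg (show ¬ 1 + (m-1) < m by omega)]
      rw [show dList R m [m-1] = 0 from rfl, Finsupp.mapDomain_zero, zero_sub, neg_zero]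
  | cons c t =>
      have hc : 1 ≤ c := hb c (by simp)
      rw [dList_cons_cons, if_neg (show ¬ 1 + (m-1) < m by omega), zero_sub]
      rw [dList_cons_cons (m := m) (a := m - 1) (c := c),
        if_neg (show ¬ (m - 1) + c < m by omega), zero_sub, mapD_neg, neg_neg,
        Finsupp.mapDomain_comp]

end Aux2
section Aux3

open Finsupp

variable {R : Type} [CommRing R]

/-- Span of honest basis elements inside the big free module. -/
noncomputable def SpG (R : Type) [CommRing R] (ℓ : ℤ) (m k : ℕ) : Submodule R (List ℕ →₀ R) :=
  Submodule.span R {f | ∃ b : OPb ℓ m k, f = Finsupp.single b.1 (1 : R)}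

lemma single_mem_SpG {ℓ : ℤ} {m k : ℕ} {l : List ℕ} (h : GoodL ℓ m k l) (r : R) :
    Finsupp.single l r ∈ SpG R ℓ m k := by
  have : Finsupp.single l r = r • Finsupp.single l (1 : R) := by
    rw [Finsupp.smul_single, smul_eq_mul, mul_one]
  rw [this]
  exact Submodule.smul_mem _ _ (Submodule.subset_span ⟨⟨l, h⟩, rfl⟩)

lemma mapDomain_cons_mem_SpG {ℓ' : ℤ} {m j : ℕ} (a : ℕ) (ha1 : 1 ≤ a) (ham : a < m)
    {x : List ℕ →₀ R} (hx : x ∈ SpG R ℓ' m j) :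
    Finsupp.mapDomain (List.cons a) x ∈ SpG R (ℓ' + a) m (j + 1) := by
  induction hx using Submodule.span_induction with
  | mem f hf =>
      obtain ⟨b, rfl⟩ := hf
      rw [Finsupp.mapDomain_single]
      refine single_mem_SpG ⟨?_, ?_, ?_⟩ 1
      · simp [b.2.1]
      · have hs := b.2.2.1
        rw [List.sum_cons]
        push_cast at hs ⊢
        omega
      · intro x hx
        rcases List.mem_cons.mp hx with rfl | hx
        · exact ⟨ha1, ham⟩
        · exact b.2.2.2 x hx
  | zero => rw [Finsupp.mapDomain_zero]; exact zero_mem _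
  | add x y _ _ hx hy => rw [Finsupp.mapDomain_add]; exact add_mem hx hy
  | smul r x _ hx => rw [Finsupp.mapDomain_smul]; exact Submodule.smul_mem _ _ hx

lemma dList_mem_SpG (m : ℕ) : ∀ (l : List ℕ) (ℓ : ℤ) (k : ℕ), GoodL ℓ m (k + 1) l →
    dList R m l ∈ SpG R ℓ m k := by
  intro l
  induction l with
  | nil => intro ℓ k _; rw [show dList R m [] = 0 from rfl]; exact zero_mem _
  | cons a t ih =>
      intro ℓ k h
      match t with
      | [] => rw [show dList R m [a] = 0 from rfl]; exact zero_mem _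
      | c :: t' =>
          obtain ⟨hlen, hsum, hmem⟩ := h
          have hk : k = t'.length + 1 := by
            simp only [List.length_cons] at hlen; omega
          subst hk
          rw [dList_cons_cons]
          rw [List.sum_cons, List.sum_cons] at hsum
          push_cast at hsum
          refine Submodule.sub_mem _ ?_ ?_
          · by_cases hac : a + c < m
            · rw [if_pos hac]
              refine Submodule.neg_mem _ (single_mem_SpG ⟨?_, ?_, ?_⟩ 1)
              · simp
              · rw [List.sum_cons]; push_cast; omega
              · intro x hx
                rcases List.mem_cons.mp hx with rfl | hx
                · have := hmem a (by simp)
                  exact ⟨by omega, hac⟩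
                · exact hmem x (by simp [hx])
            · rw [if_neg hac]; exact zero_mem _
          · have hgood : GoodL (ℓ - a) m (t'.length + 1) (c :: t') := by
              refine ⟨by simp, ?_, ?_⟩
              · rw [List.sum_cons]; push_cast; omega
              · intro x hx; exact hmem x (by simp [hx])
            have := mapDomain_cons_mem_SpG (R := R) a (hmem a (by simp)).1
              (hmem a (by simp)).2 (ih (ℓ - a) t'.length hgood)
            rwa [sub_add_cancel] at this

lemma hList_mem_SpG {m : ℕ} {l : List ℕ} {ℓ : ℤ} {k : ℕ} (h : GoodL ℓ m k l) :
    hList R m l ∈ SpG R ℓ m (k + 1) := by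
  cases l with
  | nil => rw [show hList R m [] = 0 from rfl]; exact zero_mem _
  | cons a t =>
      obtain ⟨hlen, hsum, hmem⟩ := h
      simp only [hList]
      split_ifs with ha
      · exact zero_mem _
      · refine single_mem_SpG ⟨?_, ?_, ?_⟩ 1
        · simp only [List.length_cons] at hlen ⊢; omega
        · rw [List.sum_cons] at hsum
          rw [List.sum_cons, List.sum_cons]
          push_cast at hsum ⊢
          omega
        · intro x hx
          have ham := (hmem a (by simp)).2
          rcases List.mem_cons.mp hx with rfl | hx
          · omega
          · rcases List.mem_cons.mp hx with rfl | hx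
            · constructor <;> omega
            · exact hmem x (by simp [hx])

lemma eL_single {ℓ : ℤ} {m k : ℕ} (b : OPb ℓ m k) (r : R) :
    eL R ℓ m k (Finsupp.single b r) = Finsupp.single b.1 r := by
  exact Finsupp.mapDomain_single

lemma eL_mem_SpG {ℓ : ℤ} {m k : ℕ} (x : OPMod R ℓ m k) : eL R ℓ m k x ∈ SpG R ℓ m k := by
  induction x using Finsupp.induction_linear with
  | zero => rw [map_zero]; exact zero_mem _
  | add f g hf hg => rw [map_add]; exact add_mem hf hg
  | single b r => rw [eL_single]; exact single_mem_SpG b.2 r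

lemma rL_apply {ℓ : ℤ} {m k : ℕ} (f : List ℕ →₀ R) (b : OPb ℓ m k) :
    rL R ℓ m k f b = f b.1 := rfl

lemma eL_injective {ℓ : ℤ} {m k : ℕ} : Function.Injective (eL R ℓ m k) :=
  Finsupp.mapDomain_injective Subtype.val_injective

lemma rL_eL {ℓ : ℤ} {m k : ℕ} (x : OPMod R ℓ m k) : rL R ℓ m k (eL R ℓ m k x) = x := by
  ext b
  rw [rL_apply]
  exact Finsupp.mapDomain_apply Subtype.val_injective x b

lemma rL_single_good {ℓ : ℤ} {m k : ℕ} {l : List ℕ} (h : GoodL ℓ m k l) (r : R) :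
    rL R ℓ m k (Finsupp.single l r) = Finsupp.single (⟨l, h⟩ : OPb ℓ m k) r := by
  ext b
  rw [rL_apply]
  simp only [Finsupp.single_apply]
  by_cases hb : (⟨l, h⟩ : OPb ℓ m k) = b
  · simp only [if_pos hb, if_pos (congrArg Subtype.val hb)]
    subst hb; exact Finsupp.single_eq_same.symm
  · simp only [if_neg hb, if_neg (fun hh => hb (Subtype.ext hh))]
    exact (Finsupp.single_eq_of_ne' hb).symm

lemma rL_single_bad {ℓ : ℤ} {m k : ℕ} {l : List ℕ} (h : ¬ GoodL ℓ m k l) (r : R) :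
    rL R ℓ m k (Finsupp.single l r) = 0 := by
  ext b
  rw [rL_apply, Finsupp.single_apply, if_neg (fun hh => h (by rw [hh]; exact b.2))]
  simp

lemma eL_rL_of_mem {ℓ : ℤ} {m k : ℕ} {x : List ℕ →₀ R} (hx : x ∈ SpG R ℓ m k) :
    eL R ℓ m k (rL R ℓ m k x) = x := by
  induction hx using Submodule.span_induction with
  | mem f hf =>
      obtain ⟨b, rfl⟩ := hf
      rw [rL_single_good b.2]; exact eL_single _ _
  | zero => rw [map_zero, map_zero]
  | add x y _ _ hx hy => rw [map_add, map_add, hx, hy]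
  | smul r x _ hx => rw [map_smul, map_smul, hx]

lemma DL_mem_SpG {ℓ : ℤ} {m k : ℕ} {x : List ℕ →₀ R} (hx : x ∈ SpG R ℓ m (k + 1)) :
    DL R m x ∈ SpG R ℓ m k := by
  induction hx using Submodule.span_induction with
  | mem f hf =>
      obtain ⟨b, rfl⟩ := hf
      rw [DL_single, one_smul]
      exact dList_mem_SpG m b.1 ℓ k b.2
  | zero => rw [map_zero]; exact zero_mem _
  | add x y _ _ hx hy => rw [map_add]; exact add_mem hx hy
  | smul r x _ hx => rw [map_smul]; exact Submodule.smul_mem _ _ hx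

lemma HL_mem_SpG {ℓ : ℤ} {m k : ℕ} {x : List ℕ →₀ R} (hx : x ∈ SpG R ℓ m k) :
    HL R m x ∈ SpG R ℓ m (k + 1) := by
  induction hx using Submodule.span_induction with
  | mem f hf =>
      obtain ⟨b, rfl⟩ := hf
      rw [HL_single, one_smul]
      exact hList_mem_SpG b.2
  | zero => rw [map_zero]; exact zero_mem _
  | add x y _ _ hx hy => rw [map_add]; exact add_mem hx hy
  | smul r x _ hx => rw [map_smul]; exact Submodule.smul_mem _ _ hx

lemma eL_dOP {ℓ : ℤ} {m k : ℕ} (x : OPMod R ℓ m (k + 1)) :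
    eL R ℓ m k (dOP R ℓ m k x) = DL R m (eL R ℓ m (k + 1) x) :=
  eL_rL_of_mem (DL_mem_SpG (eL_mem_SpG x))

/-- chain-level homotopy -/
noncomputable def hOP (R : Type) [CommRing R] (ℓ : ℤ) (m k : ℕ) :
    OPMod R ℓ m k →ₗ[R] OPMod R ℓ m (k + 1) :=
  rL R ℓ m (k + 1) ∘ₗ HL R m ∘ₗ eL R ℓ m k

lemma eL_hOP {ℓ : ℤ} {m k : ℕ} (x : OPMod R ℓ m k) :
    eL R ℓ m (k + 1) (hOP R ℓ m k x) = HL R m (eL R ℓ m k x) :=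
  eL_rL_of_mem (HL_mem_SpG (eL_mem_SpG x))

lemma dOP_dOP {ℓ : ℤ} {m k : ℕ} (x : OPMod R ℓ m (k + 2)) :
    dOP R ℓ m k (dOP R ℓ m (k + 1) x) = 0 := by
  apply eL_injective (ℓ := ℓ) (m := m) (k := k)
  rw [map_zero, eL_dOP, eL_dOP, DL_DL]

end Aux3
section Aux4

open Finsupp

variable {R : Type} [CommRing R]

lemma eL_phi {ℓ : ℤ} {m : ℕ} (hm : 2 ≤ m) {k : ℕ} (x : OPMod R (ℓ - m) m k) :
    eL R ℓ m (k + 2) (phiOP R ℓ m hm k x)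
      = Finsupp.mapDomain (List.cons 1 ∘ List.cons (m - 1)) (eL R (ℓ - m) m k x) := by
  induction x using Finsupp.induction_linear with
  | zero => rw [map_zero, map_zero, map_zero, Finsupp.mapDomain_zero]
  | add f g hf hg => rw [map_add, map_add, map_add, Finsupp.mapDomain_add, hf, hg]
  | single b r =>
      exact (congrArg (eL R ℓ m (k + 2)) Finsupp.mapDomain_single).trans
        ((eL_single _ _).trans (((congrArg (Finsupp.mapDomain (List.cons 1 ∘ List.cons (m - 1))) (eL_single b r)).trans Finsupp.mapDomain_single).symm))

lemma phi_injective {ℓ : ℤ} {m : ℕ} (hm : 2 ≤ m) {k : ℕ} :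
    Function.Injective (phiOP R ℓ m hm k) := by
  intro x y hxy
  have h1 := congrArg (eL R ℓ m (k + 2)) hxy
  rw [eL_phi hm, eL_phi hm] at h1
  have hpp : Function.Injective (List.cons 1 ∘ List.cons (m - 1)) := by
    intro u v h; simpa using h
  exact eL_injective (Finsupp.mapDomain_injective hpp h1)

lemma DL_mapDomain_pp {ℓ' : ℤ} {m j : ℕ} (hm : 2 ≤ m) {y : List ℕ →₀ R}
    (hy : y ∈ SpG R ℓ' m j) :
    DL R m (Finsupp.mapDomain (List.cons 1 ∘ List.cons (m - 1)) y)
      = Finsupp.mapDomain (List.cons 1 ∘ List.cons (m - 1)) (DL R m y) := by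
  induction hy using Submodule.span_induction with
  | mem f hf =>
      obtain ⟨b, rfl⟩ := hf
      rw [Finsupp.mapDomain_single]
      simp only [Function.comp_apply]
      rw [DL_single, DL_single, one_smul, one_smul]
      exact dList_pp m hm b.1 (fun x hx => (b.2.2.2 x hx).1)
  | zero => simp
  | add x y _ _ hx hy =>
      rw [Finsupp.mapDomain_add, map_add, hx, hy, map_add, Finsupp.mapDomain_add]
  | smul r x _ hx =>
      rw [Finsupp.mapDomain_smul, map_smul, hx, map_smul, Finsupp.mapDomain_smul]

lemma dOP_phi_succ {ℓ : ℤ} {m : ℕ} (hm : 2 ≤ m) (k : ℕ) (x : OPMod R (ℓ - m) m (k + 1)) :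
    dOP R ℓ m (k + 2) (phiOP R ℓ m hm (k + 1) x)
      = phiOP R ℓ m hm k (dOP R (ℓ - m) m k x) := by
  apply eL_injective
  rw [eL_dOP, eL_phi hm, eL_phi hm, DL_mapDomain_pp hm (eL_mem_SpG x), eL_dOP]

lemma DL_eL_deg0 {ℓ' : ℤ} {m : ℕ} (x : OPMod R ℓ' m 0) :
    DL R m (eL R ℓ' m 0 x) = 0 := by
  induction x using Finsupp.induction_linear with
  | zero => rw [map_zero, map_zero]
  | add f g hf hg => rw [map_add, map_add, hf, hg, add_zero]
  | single b r =>
      have hb : b.1 = [] := List.length_eq_zero_iff.mp b.2.1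
      rw [eL_single, hb, DL_single, show dList R m [] = 0 from rfl, smul_zero]

lemma dOP_phi_zero {ℓ : ℤ} {m : ℕ} (hm : 2 ≤ m) (x : OPMod R (ℓ - m) m 0) :
    dOP R ℓ m 1 (phiOP R ℓ m hm 0 x) = 0 := by
  apply eL_injective
  rw [map_zero, eL_dOP, eL_phi hm, DL_mapDomain_pp hm (eL_mem_SpG x), DL_eL_deg0,
    Finsupp.mapDomain_zero]

lemma hOP_phi {ℓ : ℤ} {m : ℕ} (hm : 2 ≤ m) (k : ℕ) (x : OPMod R (ℓ - m) m k) :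
    hOP R ℓ m (k + 2) (phiOP R ℓ m hm k x) = 0 := by
  apply eL_injective
  rw [map_zero, eL_hOP, eL_phi hm, Finsupp.mapDomain_comp, HL_mapDomain_cons1]

end Aux4
section Aux5

open Finsupp

variable {R : Type} [CommRing R]

lemma homotopy_mem_SpS {ℓ : ℤ} {m j : ℕ} (hm : 2 ≤ m) (hl : 2 ≤ ℓ)
    {y : List ℕ →₀ R} (hy : y ∈ SpG R ℓ m j) :
    y + DL R m (HL R m y) + HL R m (DL R m y) ∈ SpS R m := by
  induction hy using Submodule.span_induction with
  | mem f hf =>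
      obtain ⟨b, rfl⟩ := hf
      rw [HL_single, one_smul, DL_single, one_smul]
      have h0 : b.1 ≠ [] := by
        intro h
        have hs := b.2.2.1
        rw [h] at hs
        simp only [List.sum_nil] at hs
        omega
      have h1 : b.1 ≠ [1] := by
        intro h
        have hs := b.2.2.1
        rw [h] at hs
        simp only [List.sum_cons, List.sum_nil] at hs
        omega
      exact homotopy_single m hm b.1 b.2.2.2 h0 h1
  | zero => simp only [map_zero, add_zero]; exact zero_mem _
  | add x y _ _ hx hy =>
      have := add_mem hx hy
      convert this using 1
      simp only [map_add]
      abel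
  | smul r x _ hx =>
      have := Submodule.smul_mem _ r hx
      convert this using 1
      simp only [map_smul, smul_add]

lemma rL_SpS_mem_range {ℓ : ℤ} {m k : ℕ} (hm : 2 ≤ m) {y : List ℕ →₀ R} (hy : y ∈ SpS R m) :
    rL R ℓ m (k + 2) y ∈ LinearMap.range (phiOP R ℓ m hm k) := by
  induction hy using Submodule.span_induction with
  | mem f hf =>
      obtain ⟨t, rfl⟩ := hf
      by_cases hg : GoodL ℓ m (k + 2) (1 :: (m - 1) :: t)
      · rw [rL_single_good hg]
        have ht : GoodL (ℓ - m) m k t := by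
          obtain ⟨hlen, hsum, hmem⟩ := hg
          refine ⟨by simpa using hlen, ?_, fun x hx => hmem x (by simp [hx])⟩
          rw [List.sum_cons, List.sum_cons] at hsum
          push_cast at hsum ⊢
          omega
        refine ⟨Finsupp.single ⟨t, ht⟩ 1, ?_⟩
        exact Finsupp.mapDomain_single
      · rw [rL_single_bad hg]
        exact zero_mem _
  | zero => rw [map_zero]; exact zero_mem _
  | add x y _ _ hx hy => rw [map_add]; exact add_mem hx hy
  | smul r x _ hx => rw [map_smul]; exact Submodule.smul_mem _ _ hx

lemma rL_SpS_low {ℓ : ℤ} {m j : ℕ} (hj : j ≤ 1) {y : List ℕ →₀ R} (hy : y ∈ SpS R m) :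
    rL R ℓ m j y = 0 := by
  induction hy using Submodule.span_induction with
  | mem f hf =>
      obtain ⟨t, rfl⟩ := hf
      refine rL_single_bad (fun hg => ?_) 1
      have := hg.1
      simp only [List.length_cons] at this
      omega
  | zero => rw [map_zero]
  | add x y _ _ hx hy => rw [map_add, hx, hy, add_zero]
  | smul r x _ hx => rw [map_smul, hx, smul_zero]

lemma length_le_sum (l : List ℕ) (h : ∀ x ∈ l, 1 ≤ x) : l.length ≤ l.sum := by
  induction l with
  | nil => simp
  | cons a t ih =>
      simp only [List.length_cons, List.sum_cons]
      have h1 := h a (by simp)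
      have h2 := ih (fun x hx => h x (by simp [hx]))
      omega

lemma opb_false_lt {ℓ : ℤ} {m k : ℕ} (h : ℓ < (k : ℤ)) (b : OPb ℓ m k) : False := by
  obtain ⟨l, hlen, hsum, hmem⟩ := b
  have h1 := length_le_sum l (fun x hx => (hmem x hx).1)
  rw [hlen] at h1
  omega

lemma opb_false_zero {ℓ : ℤ} {m : ℕ} (h : ℓ ≠ 0) (b : OPb ℓ m 0) : False := by
  obtain ⟨l, hlen, hsum, hmem⟩ := b
  rw [List.length_eq_zero_iff.mp hlen] at hsum
  simp at hsum
  omega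

lemma opmod_eq_zero {ℓ : ℤ} {m k : ℕ} (h : OPb ℓ m k → False) (x : OPMod R ℓ m k) : x = 0 := by
  ext b
  exact (h b).elim

lemma homotopy_mem_range {ℓ : ℤ} {m k : ℕ} (hm : 2 ≤ m) (hl : 2 ≤ ℓ) (x : OPMod R ℓ m (k + 2)) :
    x + dOP R ℓ m (k + 2) (hOP R ℓ m (k + 2) x) + hOP R ℓ m (k + 1) (dOP R ℓ m (k + 1) x)
      ∈ LinearMap.range (phiOP R ℓ m hm k) := by
  have he : eL R ℓ m (k + 2)
        (x + dOP R ℓ m (k + 2) (hOP R ℓ m (k + 2) x) + hOP R ℓ m (k + 1) (dOP R ℓ m (k + 1) x))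
      = eL R ℓ m (k + 2) x + DL R m (HL R m (eL R ℓ m (k + 2) x))
          + HL R m (DL R m (eL R ℓ m (k + 2) x)) := by
    rw [map_add, map_add, eL_dOP, eL_hOP, eL_hOP, eL_dOP]
  have hmem' := homotopy_mem_SpS hm hl (eL_mem_SpG x)
  rw [← he] at hmem'
  have h2 := rL_SpS_mem_range (ℓ := ℓ) (k := k) hm hmem'
  rwa [rL_eL] at h2

lemma homotopy_deg1 {ℓ : ℤ} {m : ℕ} (hm : 2 ≤ m) (hl : 2 ≤ ℓ) (x : OPMod R ℓ m 1) :
    x + dOP R ℓ m 1 (hOP R ℓ m 1 x) + hOP R ℓ m 0 (dOP R ℓ m 0 x) = 0 := by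
  have he : eL R ℓ m 1
        (x + dOP R ℓ m 1 (hOP R ℓ m 1 x) + hOP R ℓ m 0 (dOP R ℓ m 0 x))
      = eL R ℓ m 1 x + DL R m (HL R m (eL R ℓ m 1 x)) + HL R m (DL R m (eL R ℓ m 1 x)) := by
    rw [map_add, map_add, eL_dOP, eL_hOP, eL_hOP, eL_dOP]
  have hmem' := homotopy_mem_SpS hm hl (eL_mem_SpG x)
  rw [← he] at hmem'
  have h2 := rL_SpS_low (ℓ := ℓ) (le_refl 1) hmem'
  rwa [rL_eL] at h2

end Aux5
section Aux6

open Finsupp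

variable {R : Type} [CommRing R]

lemma ker_transfer {ℓ : ℤ} {m K : ℕ} (hm : 2 ≤ m) (hl : 2 ≤ ℓ)
    (x : OPMod R ℓ m (K + 2)) (hx : dOP R ℓ m (K + 1) x = 0) :
    ∃ y : OPMod R (ℓ - m) m K, dOPOut R (ℓ - m) m K y = 0 ∧
      x + dOP R ℓ m (K + 2) (hOP R ℓ m (K + 2) x) = phiOP R ℓ m hm K y := by
  have hmem := homotopy_mem_range hm hl (k := K) x
  rw [hx, map_zero, add_zero] at hmem
  obtain ⟨y, hy⟩ := hmem
  refine ⟨y, ?_, hy.symm⟩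
  cases K with
  | zero => rfl
  | succ J =>
      show dOP R (ℓ - m) m J y = 0
      apply phi_injective (R := R) hm (k := J)
      rw [map_zero, ← dOP_phi_succ hm J y, hy, map_add, hx, zero_add, dOP_dOP]

lemma phi_boundary {ℓ : ℤ} {m K : ℕ} (hm : 2 ≤ m) (hl : 2 ≤ ℓ) (y : OPMod R (ℓ - m) m K)
    (h : phiOP R ℓ m hm K y ∈ LinearMap.range (dOP R ℓ m (K + 2))) :
    y ∈ LinearMap.range (dOP R (ℓ - m) m K) := by
  obtain ⟨w, hw⟩ := h
  obtain ⟨v, hv⟩ := homotopy_mem_range hm hl (k := K + 1) w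
  rw [hw, hOP_phi hm K y, add_zero] at hv
  have h2 := congrArg (dOP R ℓ m (K + 2)) hv
  rw [map_add, dOP_dOP, add_zero, hw, dOP_phi_succ hm K v] at h2
  exact ⟨v, phi_injective hm h2⟩

lemma oph_eq_zero_iff {ℓ : ℤ} {m k : ℕ} (w : LinearMap.ker (dOPOut R ℓ m k)) :
    (Submodule.Quotient.mk w : OPH R ℓ m k) = 0 ↔
      (w : OPMod R ℓ m k) ∈ LinearMap.range (dOPOut R ℓ m (k + 1)) := by
  rw [Submodule.Quotient.mk_eq_zero]
  exact Submodule.mem_comap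

lemma oph_sub_mem {ℓ : ℤ} {m k : ℕ} (w z : LinearMap.ker (dOPOut R ℓ m k)) (r : R) :
    (Submodule.Quotient.mk w : OPH R ℓ m k) = r • Submodule.Quotient.mk z ↔
      (w : OPMod R ℓ m k) - r • (z : OPMod R ℓ m k)
        ∈ LinearMap.range (dOPOut R ℓ m (k + 1)) := by
  rw [← Submodule.Quotient.mk_smul, Submodule.Quotient.eq]
  exact Submodule.mem_comap

end Aux6
section Aux7

open Finsupp

variable {R : Type} [CommRing R]

/-- The full statement, as a predicate. -/
def OPHStmt (R : Type) [CommRing R] (m k : ℕ) (ℓ : ℤ) : Prop :=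
  (¬((∃ i : ℕ, k = 2 * i ∧ ℓ = (m : ℤ) * i) ∨
      (∃ i : ℕ, k = 2 * i + 1 ∧ ℓ = (m : ℤ) * i + 1)) →
    ∀ c : OPH R ℓ m k, c = 0) ∧
  (∀ i : ℕ, k = 2 * i → ℓ = (m : ℤ) * i →
    ∃ (b : OPb ℓ m k) (z : LinearMap.ker (dOPOut R ℓ m k)),
      b.1 = altL m i ∧ (z : OPMod R ℓ m k) = Finsupp.single b 1 ∧
      (∀ y : OPH R ℓ m k, ∃ r : R, y = r • (Submodule.Quotient.mk z : OPH R ℓ m k)) ∧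
      (∀ r : R, r • (Submodule.Quotient.mk z : OPH R ℓ m k) = 0 → r = 0)) ∧
  (∀ i : ℕ, k = 2 * i + 1 → ℓ = (m : ℤ) * i + 1 →
    ∃ (b : OPb ℓ m k) (z : LinearMap.ker (dOPOut R ℓ m k)),
      b.1 = altL m i ++ [1] ∧ (z : OPMod R ℓ m k) = Finsupp.single b 1 ∧
      (∀ y : OPH R ℓ m k, ∃ r : R, y = r • (Submodule.Quotient.mk z : OPH R ℓ m k)) ∧
      (∀ r : R, r • (Submodule.Quotient.mk z : OPH R ℓ m k) = 0 → r = 0))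

lemma stmt_of_trivial {m k : ℕ} {ℓ : ℤ} (htriv : OPb ℓ m k → False)
    (hs2 : ∀ i : ℕ, k = 2 * i → ℓ = (m : ℤ) * i → False)
    (hs3 : ∀ i : ℕ, k = 2 * i + 1 → ℓ = (m : ℤ) * i + 1 → False) :
    OPHStmt R m k ℓ := by
  refine ⟨fun _ c => ?_, fun i hk hl => (hs2 i hk hl).elim, fun i hk hl => (hs3 i hk hl).elim⟩
  obtain ⟨w, rfl⟩ := Submodule.Quotient.mk_surjective _ c
  have hw : w = 0 := Subtype.ext (opmod_eq_zero htriv w.1)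
  rw [hw, Submodule.Quotient.mk_zero]

lemma stmt_rank1 {m k : ℕ} {ℓ : ℤ} (b : OPb ℓ m k) (huniq : ∀ b' : OPb ℓ m k, b' = b)
    (hker : dOPOut R ℓ m k (Finsupp.single b 1) = 0)
    (htriv : OPb ℓ m (k + 1) → False) :
    ∃ z : LinearMap.ker (dOPOut R ℓ m k), (z : OPMod R ℓ m k) = Finsupp.single b 1 ∧
      (∀ y : OPH R ℓ m k, ∃ r : R, y = r • (Submodule.Quotient.mk z : OPH R ℓ m k)) ∧
      (∀ r : R, r • (Submodule.Quotient.mk z : OPH R ℓ m k) = 0 → r = 0) := by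
  refine ⟨⟨Finsupp.single b 1, LinearMap.mem_ker.mpr hker⟩, rfl, ?_, ?_⟩
  · intro y
    obtain ⟨w, rfl⟩ := Submodule.Quotient.mk_surjective _ y
    refine ⟨(w : OPMod R ℓ m k) b, ?_⟩
    have hw : w = ((w : OPMod R ℓ m k) b)
        • (⟨Finsupp.single b 1, LinearMap.mem_ker.mpr hker⟩ :
            LinearMap.ker (dOPOut R ℓ m k)) := by
      apply Subtype.ext
      ext b'
      rw [huniq b']
      rw [SetLike.val_smul, Finsupp.smul_apply, Finsupp.single_eq_same, smul_eq_mul, mul_one]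
    conv_lhs => rw [hw]
    rw [Submodule.Quotient.mk_smul]
  · intro r hr
    rw [← Submodule.Quotient.mk_smul, Submodule.Quotient.mk_eq_zero,
      Submodule.mem_comap] at hr
    obtain ⟨x, hx⟩ := hr
    rw [opmod_eq_zero htriv x, map_zero] at hx
    have h2 := congrArg (fun f => f b) hx
    simp only [Finsupp.coe_zero, Pi.zero_apply] at h2
    have h3 : (0 : R) = (r • Finsupp.single b (1 : R)) b := h2
    rw [Finsupp.smul_apply, Finsupp.single_eq_same, smul_eq_mul, mul_one] at h3
    exact h3.symm

lemma special_shift {m : ℕ} (K : ℕ) (ℓ : ℤ) :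
    ((∃ i : ℕ, K + 2 = 2 * i ∧ ℓ = (m : ℤ) * i) ∨
      (∃ i : ℕ, K + 2 = 2 * i + 1 ∧ ℓ = (m : ℤ) * i + 1))
    ↔ ((∃ i : ℕ, K = 2 * i ∧ ℓ - m = (m : ℤ) * i) ∨
      (∃ i : ℕ, K = 2 * i + 1 ∧ ℓ - m = (m : ℤ) * i + 1)) := by
  constructor
  · rintro (⟨i, hk, hli⟩ | ⟨i, hk, hli⟩)
    · have hi : 1 ≤ i := by omega
      refine Or.inl ⟨i - 1, by omega, ?_⟩
      rw [hli, Nat.cast_sub hi, Nat.cast_one, mul_sub, mul_one]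
    · have hi : 1 ≤ i := by omega
      refine Or.inr ⟨i - 1, by omega, ?_⟩
      rw [hli, Nat.cast_sub hi, Nat.cast_one, mul_sub, mul_one]
      ring
  · rintro (⟨i, hk, hli⟩ | ⟨i, hk, hli⟩)
    · refine Or.inl ⟨i + 1, by omega, ?_⟩
      push_cast
      rw [mul_add, mul_one]
      linarith
    · refine Or.inr ⟨i + 1, by omega, ?_⟩
      push_cast
      rw [mul_add, mul_one]
      linarith

end Aux7
section Aux8

open Finsupp

variable {R : Type} [CommRing R]

lemma stmt_base {m k : ℕ} (hm : 2 ≤ m) {ℓ : ℤ} (hl : ℓ ≤ 1) : OPHStmt R m k ℓ := by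
  rcases lt_trichotomy ℓ 0 with hneg | h0 | hpos
  · refine stmt_of_trivial (fun b => opb_false_lt (by omega) b) ?_ ?_
    · intro i _ hli
      have h1 : (0 : ℤ) ≤ (m : ℤ) * i := by positivity
      linarith
    · intro i _ hli
      have h1 : (0 : ℤ) ≤ (m : ℤ) * i := by positivity
      linarith
  · subst h0
    match k with
    | 0 =>
        refine ⟨fun hns => absurd (Or.inl ⟨0, rfl, by simp⟩) hns, ?_, ?_⟩
        · intro i hk hli
          have hi : i = 0 := by omega
          subst hi
          have hgood : GoodL 0 m 0 [] := ⟨rfl, by simp, by simp⟩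
          obtain ⟨z, hz1, hz2, hz3⟩ := stmt_rank1 (R := R) (⟨[], hgood⟩ : OPb 0 m 0)
            (fun b' => Subtype.ext (List.length_eq_zero_iff.mp b'.2.1))
            (LinearMap.zero_apply _)
            (fun b => opb_false_lt (by omega) b)
          exact ⟨⟨[], hgood⟩, z, rfl, hz1, hz2, hz3⟩
        · intro i hk hli
          have h1 : (0 : ℤ) ≤ (m : ℤ) * i := by positivity
          linarith
    | (j + 1) =>
        refine stmt_of_trivial (fun b => opb_false_lt (by omega) b) ?_ ?_
        · intro i hk hli
          rcases mul_eq_zero.mp hli.symm with h | h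
          · omega
          · have hi : i = 0 := by exact_mod_cast h
            omega
        · intro i hk hli
          have h1 : (0 : ℤ) ≤ (m : ℤ) * i := by positivity
          linarith
  · have h1 : ℓ = 1 := by omega
    subst h1
    match k with
    | 0 =>
        refine stmt_of_trivial (fun b => opb_false_zero (by omega) b) ?_ ?_
        · intro i hk hli
          have hi : i = 0 := by omega
          subst hi
          simp at hli
        · intro i hk _
          omega
    | 1 =>
        refine ⟨fun hns => absurd (Or.inr ⟨0, rfl, by simp⟩) hns, ?_, ?_⟩
        · intro i hk _
          omega
        · intro i hk hli
          have hi : i = 0 := by omega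
          subst hi
          have hgood : GoodL 1 m 1 [1] :=
            ⟨rfl, by simp, by intro x hx; simp at hx; omega⟩
          have huniq : ∀ b' : OPb 1 m 1, b' = ⟨[1], hgood⟩ := by
            intro b'
            obtain ⟨l, hlen, hsum, hmem⟩ := b'
            apply Subtype.ext
            obtain ⟨a, rfl⟩ := List.length_eq_one_iff.mp hlen
            simp only [List.sum_cons, List.sum_nil] at hsum
            have ha : a = 1 := by omega
            simp [ha]
          obtain ⟨z, hz1, hz2, hz3⟩ := stmt_rank1 (R := R) (⟨[1], hgood⟩ : OPb 1 m 1) huniq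
            (opmod_eq_zero (fun b => opb_false_zero (by omega) b) _)
            (fun b => opb_false_lt (by omega) b)
          exact ⟨⟨[1], hgood⟩, z, rfl, hz1, hz2, hz3⟩
    | (j + 2) =>
        refine stmt_of_trivial (fun b => opb_false_lt (by omega) b) ?_ ?_
        · intro i hk hli
          have hi : (1 : ℤ) ≤ (i : ℤ) := by
            have : 1 ≤ i := by omega
            exact_mod_cast this
          have h2 : (2 : ℤ) * 1 ≤ (m : ℤ) * i := by
            apply mul_le_mul (by exact_mod_cast hm) hi (by norm_num) (by positivity)
          linarith
        · intro i hk hli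
          have hmi : (m : ℤ) * i = 0 := by linarith
          rcases mul_eq_zero.mp hmi with h | h
          · omega
          · have hi : i = 0 := by exact_mod_cast h
            omega

end Aux8
section Aux9

open Finsupp

variable {R : Type} [CommRing R]

lemma dOPOut_succ_apply {R : Type} [CommRing R] {ℓ : ℤ} {m k : ℕ} (x : OPMod R ℓ m (k + 1)) :
    dOPOut R ℓ m (k + 1) x = dOP R ℓ m k x := rfl

lemma coe_mk_ker {ℓ : ℤ} {m k : ℕ} (x : OPMod R ℓ m k) (h : x ∈ LinearMap.ker (dOPOut R ℓ m k)) :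
    ((⟨x, h⟩ : LinearMap.ker (dOPOut R ℓ m k)) : OPMod R ℓ m k) = x := rfl

lemma good_pp {ℓ : ℤ} {m : ℕ} (hm : 2 ≤ m) {K : ℕ} (b' : OPb (ℓ - m) m K) :
    GoodL ℓ m (K + 2) (1 :: (m - 1) :: b'.1) := by
  obtain ⟨hlen, hsum, hmem⟩ := b'.2
  refine ⟨by simp [hlen], ?_, ?_⟩
  · rw [List.sum_cons, List.sum_cons]
    push_cast at hsum ⊢
    omega
  · intro x hx
    rcases List.mem_cons.mp hx with rfl | hx
    · omega
    · rcases List.mem_cons.mp hx with rfl | hx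
      · omega
      · exact hmem x hx

lemma phi_single {ℓ : ℤ} {m : ℕ} (hm : 2 ≤ m) {K : ℕ} (b' : OPb (ℓ - m) m K)
    (hgood : GoodL ℓ m (K + 2) (1 :: (m - 1) :: b'.1)) :
    phiOP R ℓ m hm K (Finsupp.single b' 1)
      = Finsupp.single (⟨1 :: (m - 1) :: b'.1, hgood⟩ : OPb ℓ m (K + 2)) (1 : R) := by
  exact Finsupp.mapDomain_single

lemma step_rank1 {m : ℕ} (hm : 2 ≤ m) {ℓ : ℤ} (hl : 2 ≤ ℓ) (K : ℕ)
    (b' : OPb (ℓ - m) m K) (z' : LinearMap.ker (dOPOut R (ℓ - m) m K))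
    (hz' : (z' : OPMod R (ℓ - m) m K) = Finsupp.single b' 1)
    (hgen' : ∀ y : OPH R (ℓ - m) m K, ∃ r : R, y = r • Submodule.Quotient.mk z')
    (hfree' : ∀ r : R, r • (Submodule.Quotient.mk z' : OPH R (ℓ - m) m K) = 0 → r = 0) :
    ∃ (b : OPb ℓ m (K + 2)) (z : LinearMap.ker (dOPOut R ℓ m (K + 2))),
      b.1 = 1 :: (m - 1) :: b'.1 ∧ (z : OPMod R ℓ m (K + 2)) = Finsupp.single b 1 ∧
      (∀ y : OPH R ℓ m (K + 2), ∃ r : R, y = r • Submodule.Quotient.mk z) ∧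
      (∀ r : R, r • (Submodule.Quotient.mk z : OPH R ℓ m (K + 2)) = 0 → r = 0) := by
  have hker : phiOP R ℓ m hm K (z' : OPMod R (ℓ - m) m K)
      ∈ LinearMap.ker (dOPOut R ℓ m (K + 2)) := by
    rw [LinearMap.mem_ker, dOPOut_succ_apply]
    cases K with
    | zero => exact dOP_phi_zero hm _
    | succ J =>
        have hz0 := LinearMap.mem_ker.mp z'.2
        rw [dOPOut_succ_apply] at hz0
        rw [dOP_phi_succ hm J, hz0, map_zero]
  refine ⟨⟨1 :: (m - 1) :: b'.1, good_pp hm b'⟩,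
    ⟨phiOP R ℓ m hm K (z' : _), hker⟩, rfl, ?_, ?_, ?_⟩
  · rw [coe_mk_ker, hz', phi_single hm b' (good_pp hm b')]; rfl
  · intro y
    obtain ⟨w, rfl⟩ := Submodule.Quotient.mk_surjective _ y
    have hx := LinearMap.mem_ker.mp w.2
    rw [dOPOut_succ_apply] at hx
    obtain ⟨u, hu0, hueq⟩ := ker_transfer hm hl _ hx
    obtain ⟨r, hr⟩ := hgen' (Submodule.Quotient.mk ⟨u, LinearMap.mem_ker.mpr hu0⟩)
    obtain ⟨v, hv⟩ := (oph_sub_mem _ _ r).mp hr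
    rw [coe_mk_ker, dOPOut_succ_apply] at hv
    refine ⟨r, (oph_sub_mem _ _ r).mpr ?_⟩
    rw [coe_mk_ker]
    refine ⟨phiOP R ℓ m hm (K + 1) v - hOP R ℓ m (K + 2) (w : _), ?_⟩
    rw [dOPOut_succ_apply, map_sub, dOP_phi_succ hm K v, hv, map_sub, map_smul, ← hueq]
    abel
  · intro r hr
    rw [← Submodule.Quotient.mk_smul, Submodule.Quotient.mk_eq_zero,
      Submodule.mem_comap] at hr
    obtain ⟨x, hx⟩ := hr
    rw [dOPOut_succ_apply] at hx
    have hx2 : dOP R ℓ m (K + 2) x = r • phiOP R ℓ m hm K (z' : _) := by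
      rw [hx]; rfl
    obtain ⟨v, hv⟩ := phi_boundary hm hl _ ⟨x, by rw [map_smul]; exact hx2⟩
    apply hfree' r
    rw [← Submodule.Quotient.mk_smul, Submodule.Quotient.mk_eq_zero, Submodule.mem_comap]
    refine ⟨v, ?_⟩
    rw [dOPOut_succ_apply, hv]
    rfl

lemma stmt_step {m : ℕ} (hm : 2 ≤ m) {ℓ : ℤ} (hl : 2 ≤ ℓ)
    (IH : ∀ k' : ℕ, OPHStmt R m k' (ℓ - m)) (k : ℕ) : OPHStmt R m k ℓ := by
  match k with
  | 0 =>
      refine ⟨fun _ c => ?_, ?_, ?_⟩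
      · obtain ⟨w, rfl⟩ := Submodule.Quotient.mk_surjective _ c
        have hw : w = 0 :=
          Subtype.ext (opmod_eq_zero (fun b => opb_false_zero (by omega) b) _)
        rw [hw, Submodule.Quotient.mk_zero]
      · intro i hk hli
        have hi : i = 0 := by omega
        subst hi
        simp at hli
        omega
      · intro i hk _
        omega
  | 1 =>
      refine ⟨fun _ c => ?_, ?_, ?_⟩
      · obtain ⟨w, rfl⟩ := Submodule.Quotient.mk_surjective _ c
        rw [oph_eq_zero_iff]
        have hx := LinearMap.mem_ker.mp w.2
        rw [dOPOut_succ_apply] at hx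
        have hh := homotopy_deg1 hm hl (w : OPMod R ℓ m 1)
        rw [hx, map_zero, add_zero] at hh
        refine ⟨-(hOP R ℓ m 1 (w : _)), ?_⟩
        rw [dOPOut_succ_apply, map_neg]
        exact neg_eq_of_add_eq_zero_left hh
      · intro i hk _
        omega
      · intro i hk hli
        have hi : i = 0 := by omega
        subst hi
        simp at hli
        omega
  | (K + 2) =>
      refine ⟨?_, ?_, ?_⟩
      · intro hns c
        have hns' := fun hs => hns ((special_shift K ℓ).mpr hs)
        obtain ⟨w, rfl⟩ := Submodule.Quotient.mk_surjective _ c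
        have hx := LinearMap.mem_ker.mp w.2
        rw [dOPOut_succ_apply] at hx
        obtain ⟨u, hu0, hueq⟩ := ker_transfer hm hl _ hx
        have hu := (IH K).1 hns' (Submodule.Quotient.mk ⟨u, LinearMap.mem_ker.mpr hu0⟩)
        rw [oph_eq_zero_iff] at hu
        obtain ⟨v, hv⟩ := hu
        rw [coe_mk_ker] at hv
        rw [dOPOut_succ_apply] at hv
        rw [oph_eq_zero_iff]
        refine ⟨phiOP R ℓ m hm (K + 1) v - hOP R ℓ m (K + 2) (w : _), ?_⟩
        rw [dOPOut_succ_apply, map_sub, dOP_phi_succ hm K v, hv, ← hueq]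
        abel
      · intro i hk hli
        have hi : 1 ≤ i := by omega
        obtain ⟨b', z', hb', hz', hgen', hfree'⟩ :=
          (IH K).2.1 (i - 1) (by omega)
            (by rw [hli, Nat.cast_sub hi, Nat.cast_one, mul_sub, mul_one])
        obtain ⟨b, z, hb, hz, hgen, hfree⟩ := step_rank1 hm hl K b' z' hz' hgen' hfree'
        refine ⟨b, z, ?_, hz, hgen, hfree⟩
        rw [hb, hb', show i = (i - 1) + 1 by omega]
        rfl
      · intro i hk hli
        have hi : 1 ≤ i := by omega
        obtain ⟨b', z', hb', hz', hgen', hfree'⟩ :=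
          (IH K).2.2 (i - 1) (by omega)
            (by rw [hli, Nat.cast_sub hi, Nat.cast_one, mul_sub, mul_one]; ring)
        obtain ⟨b, z, hb, hz, hgen, hfree⟩ := step_rank1 hm hl K b' z' hz' hgen' hfree'
        refine ⟨b, z, ?_, hz, hgen, hfree⟩
        rw [hb, hb', show i = (i - 1) + 1 by omega]
        rfl

end Aux9

/-- for `m ≥ 2`, the homology `H_k(OP(ℓ,m))` vanishes unless
`(k,ℓ) = (2i, mi)` or `(k,ℓ) = (2i+1, mi+1)` for some `i ≥ 0`, in which cases it is free
of rank 1, generated by the class of `(1,m-1,...,1,m-1)` (with `2i` entries), resp.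
`(1,m-1,...,1,m-1,1)` (with `2i+1` entries). -/
theorem OPH_computation (R : Type) [CommRing R] (m : ℕ) (hm : 2 ≤ m) (k : ℕ) (ℓ : ℤ) :
    (¬((∃ i : ℕ, k = 2 * i ∧ ℓ = (m : ℤ) * i) ∨
        (∃ i : ℕ, k = 2 * i + 1 ∧ ℓ = (m : ℤ) * i + 1)) →
      ∀ c : OPH R ℓ m k, c = 0) ∧
    (∀ i : ℕ, k = 2 * i → ℓ = (m : ℤ) * i →
      ∃ (b : OPb ℓ m k) (z : LinearMap.ker (dOPOut R ℓ m k)),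
        b.1 = altL m i ∧ (z : OPMod R ℓ m k) = Finsupp.single b 1 ∧
        (∀ y : OPH R ℓ m k, ∃ r : R, y = r • (Submodule.Quotient.mk z : OPH R ℓ m k)) ∧
        (∀ r : R, r • (Submodule.Quotient.mk z : OPH R ℓ m k) = 0 → r = 0)) ∧
    (∀ i : ℕ, k = 2 * i + 1 → ℓ = (m : ℤ) * i + 1 →
      ∃ (b : OPb ℓ m k) (z : LinearMap.ker (dOPOut R ℓ m k)),
        b.1 = altL m i ++ [1] ∧ (z : OPMod R ℓ m k) = Finsupp.single b 1 ∧
        (∀ y : OPH R ℓ m k, ∃ r : R, y = r • (Submodule.Quotient.mk z : OPH R ℓ m k)) ∧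
        (∀ r : R, r • (Submodule.Quotient.mk z : OPH R ℓ m k) = 0 → r = 0)) := by
  suffices H : ∀ (n : ℕ) (ℓ' : ℤ), ℓ' ≤ (n : ℤ) → ∀ k', OPHStmt R m k' ℓ' by
    exact H ℓ.toNat ℓ (Int.self_le_toNat ℓ) k
  intro n
  induction n with
  | zero =>
      intro ℓ' hle k'
      exact stmt_base hm (by omega)
  | succ n ih =>
      intro ℓ' hle k'
      by_cases hs : ℓ' ≤ 1
      · exact stmt_base hm hs
      · exact stmt_step hm (by omega) (fun k'' => ih (ℓ' - m) (by omega) k'') k'
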